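/- Let d ≥ 2 and let f : T^{d−1} → ℝ be a finitely supported function such that: f(y) ≥ 0 for all y; the support of f is contained in ORT_d ∪ UB_d ∪ {0}; f(0) > 0; and for every γ ∈ ℤ^{d−1} the finite exponential sum f̂(γ) = ∑_y f(y) e^{2πi⟨γ,y⟩} is a nonnegative real number. Then ∑_y f(y) ≤ d² · f(0). -/

import Mathlib

/-- `e^{2πi y}` for a point `y` of the torus `ℝ/ℤ`. -/
noncomputable def torusExp (y : AddCircle (1 : ℝ)) : ℂ := (AddCircle.toCircle y : ℂ)

lemma torusExp_zero : torusExp 0 = 1 := by simp [torusExp]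

lemma torusExp_add (a b : AddCircle (1 : ℝ)) :
    torusExp (a + b) = torusExp a * torusExp b := by
  simp [torusExp, AddCircle.toCircle_add]

lemma torusExp_neg (a : AddCircle (1 : ℝ)) :
    torusExp (-a) = (starRingEnd ℂ) (torusExp a) := by
  have h : AddCircle.toCircle (-a) = (AddCircle.toCircle a)⁻¹ := by
    apply eq_inv_of_mul_eq_one_left
    rw [← AddCircle.toCircle_add, neg_add_cancel, AddCircle.toCircle_zero]
  rw [torusExp, h, Circle.coe_inv_eq_conj, torusExp]

noncomputable def Ee {N : ℕ} (y : Fin N → AddCircle (1 : ℝ)) (γ : Fin N → ℤ) : ℂ :=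
  ∏ j, torusExp (γ j • y j)

lemma Ee_zero {N : ℕ} (y : Fin N → AddCircle (1 : ℝ)) : Ee y 0 = 1 := by
  simp [Ee, torusExp_zero]

lemma Ee_add {N : ℕ} (y : Fin N → AddCircle (1 : ℝ)) (γ δ : Fin N → ℤ) :
    Ee y (γ + δ) = Ee y γ * Ee y δ := by
  rw [Ee, Ee, Ee, ← Finset.prod_mul_distrib]
  refine Finset.prod_congr rfl fun j _ => ?_
  rw [Pi.add_apply, add_zsmul, torusExp_add]

lemma Ee_neg {N : ℕ} (y : Fin N → AddCircle (1 : ℝ)) (γ : Fin N → ℤ) :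
    Ee y (-γ) = (starRingEnd ℂ) (Ee y γ) := by
  rw [Ee, Ee, map_prod]
  refine Finset.prod_congr rfl fun j _ => ?_
  rw [Pi.neg_apply, neg_zsmul, torusExp_neg]

/-- `eps 0 = 0`, `eps (j+1) = e_j`. -/
noncomputable def eps {N : ℕ} : Fin (N + 1) → (Fin N → ℤ) :=
  Fin.cases 0 (fun j => Pi.single j 1)

lemma Ee_eps {N : ℕ} (y : Fin N → AddCircle (1 : ℝ)) :
    ∀ i, Ee y (eps i) = Fin.cases 1 (fun j => torusExp (y j)) i := by
  refine Fin.cases ?_ (fun j => ?_)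
  · simp [eps, Ee_zero]
  · simp only [eps, Fin.cases_succ, Ee]
    rw [Finset.prod_eq_single j]
    · simp
    · intro k _ hk
      rw [Pi.single_eq_of_ne hk, zero_smul, torusExp_zero]
    · simp

lemma sum_Ee_eps {N : ℕ} (y : Fin N → AddCircle (1 : ℝ)) :
    ∑ i, Ee y (eps i) = 1 + ∑ j, torusExp (y j) := by
  rw [Fin.sum_univ_succ]
  simp [Ee_eps]

lemma quad_sum_eq {N : ℕ} (y : Fin N → AddCircle (1 : ℝ)) :
    ∑ q ∈ Finset.univ.filter
        (fun q : Fin (N+1) × Fin (N+1) × Fin (N+1) × Fin (N+1) => q.2.2.1 ≠ q.2.2.2),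
      Ee y (eps q.1 - eps q.2.1 + eps q.2.2.1 - eps q.2.2.2)
    = ((1 + ∑ j, torusExp (y j)) * (starRingEnd ℂ) (1 + ∑ j, torusExp (y j))) *
      ((1 + ∑ j, torusExp (y j)) * (starRingEnd ℂ) (1 + ∑ j, torusExp (y j)) - (N + 1)) := by
  classical
  set T : ℂ := 1 + ∑ j, torusExp (y j) with hT
  have hTA : T = ∑ i, Ee y (eps i) := (sum_Ee_eps y).symm
  have hconj : (starRingEnd ℂ) T = ∑ i, Ee y (-(eps i)) := by
    rw [hTA, map_sum]; exact Finset.sum_congr rfl fun i _ => (Ee_neg y (eps i)).symm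
  have hg : ∀ i k l m : Fin (N+1), Ee y (eps i - eps k + eps l - eps m)
      = (Ee y (eps i) * Ee y (-(eps k))) * (Ee y (eps l) * Ee y (-(eps m))) := by
    intro i k l m
    rw [sub_eq_add_neg, sub_eq_add_neg, Ee_add, Ee_add, Ee_add]; ring
  have hTT : T * (starRingEnd ℂ) T = ∑ i, ∑ k, Ee y (eps i) * Ee y (-(eps k)) := by
    rw [hconj, hTA, Finset.sum_mul_sum]
  have hfull : ∑ q : Fin (N+1) × Fin (N+1) × Fin (N+1) × Fin (N+1),
      Ee y (eps q.1 - eps q.2.1 + eps q.2.2.1 - eps q.2.2.2)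
      = (T * (starRingEnd ℂ) T) * (T * (starRingEnd ℂ) T) := by
    simp only [Fintype.sum_prod_type]
    calc ∑ i, ∑ k, ∑ l, ∑ m, Ee y (eps i - eps k + eps l - eps m)
        = ∑ i, ∑ k, (Ee y (eps i) * Ee y (-(eps k))) * (T * (starRingEnd ℂ) T) := by
          refine Finset.sum_congr rfl fun i _ => Finset.sum_congr rfl fun k _ => ?_
          rw [hTT, Finset.mul_sum]
          refine Finset.sum_congr rfl fun l _ => ?_
          rw [Finset.mul_sum]
          exact Finset.sum_congr rfl fun m _ => hg i k l m
      _ = (∑ i, ∑ k, Ee y (eps i) * Ee y (-(eps k))) * (T * (starRingEnd ℂ) T) := by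
          rw [Finset.sum_mul]
          exact Finset.sum_congr rfl fun i _ => (Finset.sum_mul _ _ _).symm
      _ = (T * (starRingEnd ℂ) T) * (T * (starRingEnd ℂ) T) := by rw [← hTT]
  have hdiag : ∑ q ∈ Finset.univ.filter
      (fun q : Fin (N+1) × Fin (N+1) × Fin (N+1) × Fin (N+1) => q.2.2.1 = q.2.2.2),
      Ee y (eps q.1 - eps q.2.1 + eps q.2.2.1 - eps q.2.2.2)
      = ((N : ℂ) + 1) * (T * (starRingEnd ℂ) T) := by
    rw [Finset.sum_filter]
    simp only [Fintype.sum_prod_type]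
    calc ∑ i, ∑ k, ∑ l, ∑ m, (if l = m then Ee y (eps i - eps k + eps l - eps m) else 0)
        = ∑ i, ∑ k, ∑ l : Fin (N+1), Ee y (eps i - eps k) := by
          refine Finset.sum_congr rfl fun i _ => Finset.sum_congr rfl fun k _ =>
            Finset.sum_congr rfl fun l _ => ?_
          rw [Finset.sum_ite_eq]
          simp
      _ = ∑ i, ∑ k, ((N : ℂ) + 1) * Ee y (eps i - eps k) := by
          refine Finset.sum_congr rfl fun i _ => Finset.sum_congr rfl fun k _ => ?_
          rw [Finset.sum_const, Finset.card_univ, Fintype.card_fin, nsmul_eq_mul]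
          push_cast
          ring
      _ = ((N : ℂ) + 1) * (T * (starRingEnd ℂ) T) := by
          rw [hTT, Finset.mul_sum]
          refine Finset.sum_congr rfl fun i _ => ?_
          rw [Finset.mul_sum]
          refine Finset.sum_congr rfl fun k _ => ?_
          rw [sub_eq_add_neg, Ee_add]
  have hsplit := Finset.sum_filter_add_sum_filter_not Finset.univ
    (fun q : Fin (N+1) × Fin (N+1) × Fin (N+1) × Fin (N+1) => q.2.2.1 ≠ q.2.2.2)
    (fun q => Ee y (eps q.1 - eps q.2.1 + eps q.2.2.1 - eps q.2.2.2))
  have hnotne : Finset.univ.filter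
      (fun q : Fin (N+1) × Fin (N+1) × Fin (N+1) × Fin (N+1) => ¬ q.2.2.1 ≠ q.2.2.2)
      = Finset.univ.filter (fun q => q.2.2.1 = q.2.2.2) := by
    simp [not_not]
  rw [hnotne, hfull, hdiag] at hsplit
  linear_combination hsplit

/-- The set `ORT_d ⊆ T^{d-1}` of points `α` with `1 + ∑_j e^{2πi α_j} = 0`. -/
noncomputable def ORT (d : ℕ) : Set (Fin (d - 1) → AddCircle (1 : ℝ)) :=
  {α | 1 + ∑ j, torusExp (α j) = 0}

/-- The set `UB_d ⊆ T^{d-1}` of points `α` with `|1 + ∑_j e^{2πi α_j}| = √d`. -/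
noncomputable def UB (d : ℕ) : Set (Fin (d - 1) → AddCircle (1 : ℝ)) :=
  {α | ‖1 + ∑ j, torusExp (α j)‖ = Real.sqrt d}

/-- If `f : T^{d-1} → ℝ` is a nonnegative finitely supported function, supported on
`ORT_d ∪ UB_d ∪ {0}`, with `f(0) > 0` and all exponential sums
`f̂(γ) = ∑_y f(y) e^{2πi⟨γ,y⟩}` nonnegative reals, then `∑_y f(y) ≤ d² · f(0)`. -/
theorem pseudo_mub_bound (d : ℕ) (hd : 2 ≤ d)
    (f : (Fin (d - 1) → AddCircle (1 : ℝ)) →₀ ℝ)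
    (hpos : ∀ y, 0 ≤ f y)
    (hsupp : ∀ y ∈ f.support, y ∈ ORT d ∪ UB d ∪ {0})
    (h0 : 0 < f 0)
    (hhat : ∀ γ : Fin (d - 1) → ℤ,
        ((∑ y ∈ f.support, (f y : ℂ) * ∏ j, torusExp (γ j • y j)).im = 0 ∧
          0 ≤ (∑ y ∈ f.support, (f y : ℂ) * ∏ j, torusExp (γ j • y j)).re)) :
    ∑ y ∈ f.support, f y ≤ (d : ℝ) ^ 2 * f 0 := by
  classical
  have hNd : d - 1 + 1 = d := by omega
  have hdC : (((d - 1 : ℕ) : ℂ) + 1) = (d : ℂ) := by exact_mod_cast congrArg (Nat.cast : ℕ → ℂ) hNd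
  set Q : Finset (Fin (d-1+1) × Fin (d-1+1) × Fin (d-1+1) × Fin (d-1+1)) :=
    Finset.univ.filter (fun q => q.2.2.1 ≠ q.2.2.2) with hQdef
  set gam : Fin (d-1+1) × Fin (d-1+1) × Fin (d-1+1) × Fin (d-1+1) → (Fin (d-1) → ℤ) :=
    fun q => eps q.1 - eps q.2.1 + eps q.2.2.1 - eps q.2.2.2 with hgamdef
  have key : ∀ y : Fin (d-1) → AddCircle (1 : ℝ),
      ∑ q ∈ Q, Ee y (gam q)
      = ((1 + ∑ j, torusExp (y j)) * (starRingEnd ℂ) (1 + ∑ j, torusExp (y j))) *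
        ((1 + ∑ j, torusExp (y j)) * (starRingEnd ℂ) (1 + ∑ j, torusExp (y j)) - ((d-1 : ℕ) + 1)) :=
    fun y => quad_sum_eq y
  -- vanishing on ORT and UB
  have hvan : ∀ y ∈ f.support, y ≠ 0 → ∑ q ∈ Q, Ee y (gam q) = 0 := by
    intro y hy hy0
    have hk := key y
    rcases hsupp y hy with (hO | hU) | hz
    · rw [show (1 + ∑ j, torusExp (y j) : ℂ) = 0 from hO] at hk
      simpa using hk
    · have hU' : ‖1 + ∑ j, torusExp (y j)‖ = Real.sqrt d := hU
      have hzz : (1 + ∑ j, torusExp (y j)) * (starRingEnd ℂ) (1 + ∑ j, torusExp (y j))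
          = (d : ℂ) := by
        rw [Complex.mul_conj, Complex.normSq_eq_norm_sq, hU',
          Real.sq_sqrt (by positivity : (0:ℝ) ≤ (d:ℝ))]
        push_cast
        ring
      rw [hzz, hdC] at hk
      simpa using hk
    · exact absurd hz hy0
  -- value at 0
  have hS0 : (1 : ℂ) + ∑ j : Fin (d-1), torusExp ((0 : Fin (d-1) → AddCircle (1:ℝ)) j) = (d : ℂ) := by
    simp only [Pi.zero_apply, torusExp_zero, Finset.sum_const, Finset.card_univ,
      Fintype.card_fin, nsmul_eq_mul, mul_one]
    rw [← hdC]; ring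
  have hval0 : ∑ q ∈ Q, Ee (0 : Fin (d-1) → AddCircle (1:ℝ)) (gam q)
      = (d : ℂ)^2 * ((d : ℂ)^2 - d) := by
    have hk := key 0
    rw [hS0] at hk
    rw [hk, Complex.conj_natCast, hdC]
    ring
  have hsupp0 : (0 : Fin (d-1) → AddCircle (1:ℝ)) ∈ f.support :=
    Finsupp.mem_support_iff.2 h0.ne'
  -- main complex identity
  have hmain : ∑ q ∈ Q, (∑ y ∈ f.support, (f y : ℂ) * Ee y (gam q))
      = (f 0 : ℂ) * ((d : ℂ)^2 * ((d : ℂ)^2 - d)) := by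
    rw [Finset.sum_comm]
    have h1 : ∀ y ∈ f.support, ∑ q ∈ Q, (f y : ℂ) * Ee y (gam q)
        = (f y : ℂ) * ∑ q ∈ Q, Ee y (gam q) := fun y _ => (Finset.mul_sum _ _ _).symm
    rw [Finset.sum_congr rfl h1]
    rw [Finset.sum_eq_single (0 : Fin (d-1) → AddCircle (1:ℝ))]
    · rw [hval0]
    · intro y hy hy0
      rw [hvan y hy hy0, mul_zero]
    · intro h; exact absurd hsupp0 h
  -- real part of the identity
  have hre : ∑ q ∈ Q, (∑ y ∈ f.support, (f y : ℂ) * Ee y (gam q)).re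
      = f 0 * ((d : ℝ)^2 * ((d : ℝ)^2 - d)) := by
    rw [← Complex.re_sum, hmain]
    have h2 : (f 0 : ℂ) * ((d : ℂ)^2 * ((d : ℂ)^2 - d))
        = ((f 0 * ((d : ℝ)^2 * ((d : ℝ)^2 - d)) : ℝ) : ℂ) := by push_cast; ring
    rw [h2, Complex.ofReal_re]
  -- the subset P of quadruples (a, b, b, a) with a ≠ b
  set P : Finset (Fin (d-1+1) × Fin (d-1+1) × Fin (d-1+1) × Fin (d-1+1)) :=
    Q.filter (fun q => q.2.1 = q.2.2.1 ∧ q.1 = q.2.2.2) with hPdef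
  have hPsub : P ⊆ Q := Finset.filter_subset _ _
  have hPgam : ∀ q ∈ P, gam q = 0 := by
    intro q hq
    rw [hPdef, Finset.mem_filter] at hq
    obtain ⟨-, hb, ha⟩ := hq
    rw [hgamdef]
    simp only
    rw [← hb, ← ha]
    abel
  have hPim : P = (Finset.univ.offDiag).image
      (fun p : Fin (d-1+1) × Fin (d-1+1) => (p.2, p.1, p.1, p.2)) := by
    ext q
    rw [hPdef, hQdef, Finset.mem_filter, Finset.mem_filter]
    constructor
    · rintro ⟨⟨-, hne⟩, hb, ha⟩
      rw [Finset.mem_image]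
      refine ⟨(q.2.2.1, q.2.2.2), ?_, ?_⟩
      · rw [Finset.mem_offDiag]
        exact ⟨Finset.mem_univ _, Finset.mem_univ _, hne⟩
      · obtain ⟨a, b, c, e⟩ := q
        simp only at hb ha hne ⊢
        rw [hb, ha]
    · intro hmem
      rw [Finset.mem_image] at hmem
      obtain ⟨p, hp, rfl⟩ := hmem
      rw [Finset.mem_offDiag] at hp
      obtain ⟨x, z⟩ := p
      exact ⟨⟨Finset.mem_univ _, hp.2.2⟩, rfl, rfl⟩
  have hPcard : (P.card : ℝ) = (d : ℝ)^2 - d := by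
    have hinj : Function.Injective
        (fun p : Fin (d-1+1) × Fin (d-1+1) => (p.2, p.1, p.1, p.2)) := by
      intro p r h
      simp only [Prod.mk.injEq] at h
      exact Prod.ext h.2.1 h.1
    rw [hPim, Finset.card_image_of_injective _ hinj, Finset.offDiag_card,
      Finset.card_univ, Fintype.card_fin]
    have h1 : (d-1+1) ≤ (d-1+1) * (d-1+1) := Nat.le_mul_of_pos_left _ (Nat.succ_pos _)
    rw [Nat.cast_sub h1]
    push_cast [hNd]
    ring
  -- lower bound
  have hPval : ∑ q ∈ P, (∑ y ∈ f.support, (f y : ℂ) * Ee y (gam q)).re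
      = (P.card : ℝ) * ∑ y ∈ f.support, f y := by
    have h3 : ∀ q ∈ P, (∑ y ∈ f.support, (f y : ℂ) * Ee y (gam q)).re
        = ∑ y ∈ f.support, f y := by
      intro q hq
      rw [hPgam q hq]
      have h4 : ∑ y ∈ f.support, (f y : ℂ) * Ee y 0
          = ((∑ y ∈ f.support, f y : ℝ) : ℂ) := by
        push_cast
        exact Finset.sum_congr rfl fun y _ => by rw [Ee_zero, mul_one]
      rw [h4, Complex.ofReal_re]
    rw [Finset.sum_congr rfl h3, Finset.sum_const, nsmul_eq_mul]
  have hQnn : ∀ q ∈ Q, 0 ≤ (∑ y ∈ f.support, (f y : ℂ) * Ee y (gam q)).re :=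
    fun q _ => (hhat (gam q)).2
  have hle : ∑ q ∈ P, (∑ y ∈ f.support, (f y : ℂ) * Ee y (gam q)).re
      ≤ ∑ q ∈ Q, (∑ y ∈ f.support, (f y : ℂ) * Ee y (gam q)).re :=
    Finset.sum_le_sum_of_subset_of_nonneg hPsub (fun q hq _ => hQnn q hq)
  rw [hPval, hPcard, hre] at hle
  have hd2 : (2 : ℝ) ≤ (d : ℝ) := by exact_mod_cast hd
  have hpos2 : (0 : ℝ) < (d : ℝ)^2 - d := by nlinarith
  have hfin : ((d:ℝ)^2 - d) * ∑ y ∈ f.support, f y ≤ ((d:ℝ)^2 - d) * ((d:ℝ)^2 * f 0) := by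
    nlinarith [hle]
  exact le_of_mul_le_mul_left hfin hpos2
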